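/- arXiv:2305.08841 — 11 statements merged into one kernel-verified Lean document; each statement's English description precedes it below -/
import Mathlib

section
/- Let A be a finite nonempty set and Q, Q' : A → ℝ. Define softmax distributions π(a) = exp(Q(a)) / Σ_{a'} exp(Q(a')) and π'(a) = exp(Q'(a)) / Σ_{a'} exp(Q'(a')). Then the ℓ1 distance satisfies Σ_a |π(a) - π'(a)| ≤ 2 * sqrt(sup_a |Q(a) - Q'(a)|). -/
open Real

lemma key_ineq (ε : ℝ) (hε0 : 0 ≤ ε) : 1 - Real.exp (-(2 * ε)) ≤ Real.sqrt ε := by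
  set s := Real.sqrt ε with hs
  have hs0 : 0 ≤ s := Real.sqrt_nonneg ε
  have hs2 : s ^ 2 = ε := Real.sq_sqrt hε0
  rcases le_or_gt 1 ε with h1 | h1
  · have : (1:ℝ) ≤ s := by
      rw [hs]; exact Real.one_le_sqrt.mpr h1
    nlinarith [Real.exp_pos (-(2 * ε))]
  · have hεle : ε ≤ 1 := le_of_lt h1
    have hsle : s ≤ 1 := by
      rw [hs]; exact Real.sqrt_le_one.mpr hεle
    have h4 : (1 - ε / 2) ^ 4 ≤ Real.exp (-(2 * ε)) := by
      have hb : 1 - ε / 2 ≤ Real.exp (-(ε / 2)) := by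
        have := Real.add_one_le_exp (-(ε / 2))
        linarith
      have hpos : (0:ℝ) ≤ 1 - ε / 2 := by linarith
      calc (1 - ε / 2) ^ 4 ≤ Real.exp (-(ε / 2)) ^ 4 :=
            pow_le_pow_left₀ hpos hb 4
        _ = Real.exp (-(2 * ε)) := by
            rw [← Real.exp_nat_mul]; ring_nf
    have hpoly : 1 - s ≤ (1 - ε / 2) ^ 4 := by
      rw [← hs2]
      nlinarith [sq_nonneg (s - 4/5), sq_nonneg s, mul_nonneg hs0 (sq_nonneg (s - 4/5)),
        mul_nonneg (mul_nonneg hs0 hs0) (sq_nonneg (s - 4/5)),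
        mul_nonneg (mul_nonneg (mul_nonneg hs0 hs0) hs0) (sq_nonneg (s - 4/5)),
        mul_nonneg (sub_nonneg.mpr hsle) (sq_nonneg (s - 4/5)),
        mul_nonneg (mul_nonneg hs0 (sub_nonneg.mpr hsle)) (sq_nonneg (s - 4/5)),
        sq_nonneg (s*(s-1)), mul_nonneg hs0 (sub_nonneg.mpr hsle), sq_nonneg (s^2-s),
        sq_nonneg (s^3 - s)]
    linarith

theorem softmax_l1_bound {A : Type*} [Fintype A] [Nonempty A] (Q Q' : A → ℝ) :
    ∑ a, |Real.exp (Q a) / ∑ a', Real.exp (Q a') -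
          Real.exp (Q' a) / ∑ a', Real.exp (Q' a')| ≤
      2 * Real.sqrt (⨆ a, |Q a - Q' a|) := by
  set ε := ⨆ a, |Q a - Q' a| with hεdef
  have hbd : ∀ a, |Q a - Q' a| ≤ ε := fun a =>
    le_ciSup (f := fun a => |Q a - Q' a|) (Set.Finite.bddAbove (Set.finite_range _)) a
  obtain ⟨a₀⟩ := ‹Nonempty A›
  have hε0 : 0 ≤ ε := le_trans (abs_nonneg _) (hbd a₀)
  set S := ∑ a', Real.exp (Q a') with hSdef
  set S' := ∑ a', Real.exp (Q' a') with hS'def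
  have hS : 0 < S := Finset.sum_pos (fun a _ => Real.exp_pos _) ⟨a₀, Finset.mem_univ a₀⟩
  have hS' : 0 < S' := Finset.sum_pos (fun a _ => Real.exp_pos _) ⟨a₀, Finset.mem_univ a₀⟩
  set c := Real.exp (-(2 * ε)) with hcdef
  have hc0 : 0 < c := Real.exp_pos _
  have hc1 : c ≤ 1 := Real.exp_le_one_iff.mpr (by linarith)
  have hONE : ∀ a : A, c * (Real.exp (Q a) / S) ≤ Real.exp (Q' a) / S' ∧
      c * (Real.exp (Q' a) / S') ≤ Real.exp (Q a) / S := by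
    intro a
    have hab := hbd a
    rw [abs_le] at hab
    have hnum1 : Real.exp (-ε) * Real.exp (Q a) ≤ Real.exp (Q' a) := by
      rw [← Real.exp_add]; exact Real.exp_le_exp.mpr (by linarith [hab.2])
    have hnum2 : Real.exp (-ε) * Real.exp (Q' a) ≤ Real.exp (Q a) := by
      rw [← Real.exp_add]; exact Real.exp_le_exp.mpr (by linarith [hab.1])
    have hden1 : S' ≤ Real.exp ε * S := by
      rw [hSdef, hS'def, Finset.mul_sum]
      apply Finset.sum_le_sum
      intro b _
      rw [← Real.exp_add]
      exact Real.exp_le_exp.mpr (by linarith [(abs_le.mp (hbd b)).1])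
    have hden2 : S ≤ Real.exp ε * S' := by
      rw [hSdef, hS'def, Finset.mul_sum]
      apply Finset.sum_le_sum
      intro b _
      rw [← Real.exp_add]
      exact Real.exp_le_exp.mpr (by linarith [(abs_le.mp (hbd b)).2])
    have hce : c = Real.exp (-ε) / Real.exp ε := by
      rw [hcdef, ← Real.exp_sub]; ring_nf
    have hexpε : 0 < Real.exp ε := Real.exp_pos _
    constructor
    · rw [hce, show Real.exp (-ε) / Real.exp ε * (Real.exp (Q a) / S) =
          (Real.exp (-ε) * Real.exp (Q a)) / (Real.exp ε * S) from by ring,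
        div_le_div_iff₀ (by positivity) hS']
      nlinarith [mul_le_mul_of_nonneg_right hnum1 hS'.le,
        mul_le_mul_of_nonneg_left hden1 (Real.exp_pos (Q' a)).le]
    · rw [hce, show Real.exp (-ε) / Real.exp ε * (Real.exp (Q' a) / S') =
          (Real.exp (-ε) * Real.exp (Q' a)) / (Real.exp ε * S') from by ring,
        div_le_div_iff₀ (by positivity) hS]
      nlinarith [mul_le_mul_of_nonneg_right hnum2 hS.le,
        mul_le_mul_of_nonneg_left hden2 (Real.exp_pos (Q a)).le]
  have habs : ∀ a : A, |Real.exp (Q a) / S - Real.exp (Q' a) / S'| ≤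
      (1 - c) * (Real.exp (Q a) / S + Real.exp (Q' a) / S') := by
    intro a
    obtain ⟨h1, h2⟩ := hONE a
    have hp : 0 ≤ Real.exp (Q a) / S := by positivity
    have hp' : 0 ≤ Real.exp (Q' a) / S' := by positivity
    rw [abs_le]
    constructor <;> nlinarith
  calc ∑ a, |Real.exp (Q a) / S - Real.exp (Q' a) / S'|
      ≤ ∑ a, (1 - c) * (Real.exp (Q a) / S + Real.exp (Q' a) / S') :=
        Finset.sum_le_sum fun a _ => habs a
    _ = (1 - c) * 2 := by
        rw [← Finset.mul_sum, Finset.sum_add_distrib, ← Finset.sum_div, ← Finset.sum_div,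
          ← hSdef, ← hS'def, div_self hS.ne', div_self hS'.ne']
        norm_num
    _ ≤ 2 * Real.sqrt ε := by
        have := key_ineq ε hε0
        linarith
end

section
/- Let A be a finite nonempty set, Q, Q' : A → ℝ, and let π, π' be the softmax distributions induced by Q and Q'. Then for every a ∈ A, π(a)/π'(a) ≤ exp(2 * ‖Q - Q'‖_∞). -/
open Real

theorem softmax_ratio_bound {A : Type*} [Fintype A] [Nonempty A] (Q Q' : A → ℝ) (a : A) :
    (Real.exp (Q a) / ∑ a', Real.exp (Q a')) /
      (Real.exp (Q' a) / ∑ a', Real.exp (Q' a')) ≤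
      Real.exp (2 * ⨆ a', |Q a' - Q' a'|) := by
  set M := ⨆ a', |Q a' - Q' a'| with hM
  have hle : ∀ b, |Q b - Q' b| ≤ M := fun b =>
    le_ciSup (f := fun a' => |Q a' - Q' a'|) (Set.Finite.bddAbove (Set.finite_range _)) b
  have hS : (0:ℝ) < ∑ a', Real.exp (Q a') :=
    Finset.sum_pos (fun i _ => Real.exp_pos _) Finset.univ_nonempty
  have hS' : (0:ℝ) < ∑ a', Real.exp (Q' a') :=
    Finset.sum_pos (fun i _ => Real.exp_pos _) Finset.univ_nonempty
  have h1 : Real.exp (Q a) ≤ Real.exp M * Real.exp (Q' a) := by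
    rw [← Real.exp_add]
    apply Real.exp_le_exp.2
    have := (abs_le.1 (hle a)).2
    linarith
  have h2 : (∑ a', Real.exp (Q' a')) ≤ Real.exp M * ∑ a', Real.exp (Q a') := by
    rw [Finset.mul_sum]
    apply Finset.sum_le_sum
    intro i _
    rw [← Real.exp_add]
    apply Real.exp_le_exp.2
    have := (abs_le.1 (hle i)).1
    linarith
  have key : Real.exp (Q a) * (∑ a', Real.exp (Q' a')) ≤
      Real.exp (2 * M) * (Real.exp (Q' a) * ∑ a', Real.exp (Q a')) := by
    calc Real.exp (Q a) * (∑ a', Real.exp (Q' a'))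
        ≤ (Real.exp M * Real.exp (Q' a)) * (Real.exp M * ∑ a', Real.exp (Q a')) := by
          apply mul_le_mul h1 h2 (le_of_lt hS') (by positivity)
      _ = Real.exp (2 * M) * (Real.exp (Q' a) * ∑ a', Real.exp (Q a')) := by
          rw [two_mul, Real.exp_add]; ring
  have h3 : (Real.exp (Q a) / ∑ a', Real.exp (Q a')) /
      (Real.exp (Q' a) / ∑ a', Real.exp (Q' a')) =
      (Real.exp (Q a) * ∑ a', Real.exp (Q' a')) /
      (Real.exp (Q' a) * ∑ a', Real.exp (Q a')) := by
    field_simp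
  rw [h3, div_le_iff₀ (by positivity)]
  calc Real.exp (Q a) * (∑ a', Real.exp (Q' a'))
      ≤ Real.exp (2 * M) * (Real.exp (Q' a) * ∑ a', Real.exp (Q a')) := key
    _ = Real.exp (2 * M) * (Real.exp (Q' a) * ∑ a', Real.exp (Q a')) := by ring
end

section
/- Let A be a finite nonempty set, Q, Q' : A → ℝ, and let π, π' be the softmax distributions induced by Q and Q'. Then the KL divergence satisfies KL(π ‖ π') = Σ_a π(a) log(π(a)/π'(a)) ≤ 2 * ‖Q - Q'‖_∞. -/
open Real

theorem softmax_kl_bound {A : Type*} [Fintype A] [Nonempty A] (Q Q' : A → ℝ) :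
    ∑ a, (Real.exp (Q a) / ∑ a', Real.exp (Q a')) *
        Real.log ((Real.exp (Q a) / ∑ a', Real.exp (Q a')) /
          (Real.exp (Q' a) / ∑ a', Real.exp (Q' a'))) ≤
      2 * ⨆ a', |Q a' - Q' a'| := by
  set S : ℝ := ∑ a', Real.exp (Q a') with hS
  set S' : ℝ := ∑ a', Real.exp (Q' a') with hS'
  have hSpos : 0 < S := Finset.sum_pos (fun a _ => Real.exp_pos _) Finset.univ_nonempty
  have hS'pos : 0 < S' := Finset.sum_pos (fun a _ => Real.exp_pos _) Finset.univ_nonempty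
  set M : ℝ := ⨆ a', |Q a' - Q' a'| with hM
  have hMb : ∀ a, |Q a - Q' a| ≤ M := fun a =>
    le_ciSup (Set.Finite.bddAbove (Set.finite_range (fun a' => |Q a' - Q' a'|))) a
  have hM0 : 0 ≤ M := le_trans (abs_nonneg _) (hMb (Classical.arbitrary A))
  have hlog : ∀ a : A,
      Real.log ((Real.exp (Q a) / S) / (Real.exp (Q' a) / S')) =
        (Q a - Q' a) + (Real.log S' - Real.log S) := by
    intro a
    rw [Real.log_div (by positivity) (by positivity),
      Real.log_div (Real.exp_ne_zero _) hSpos.ne',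
      Real.log_div (Real.exp_ne_zero _) hS'pos.ne',
      Real.log_exp, Real.log_exp]
    ring
  have hsum1 : ∑ a, Real.exp (Q a) / S = 1 := by
    rw [← Finset.sum_div, ← hS, div_self hSpos.ne']
  calc ∑ a, (Real.exp (Q a) / S) *
        Real.log ((Real.exp (Q a) / S) / (Real.exp (Q' a) / S'))
      = (∑ a, (Real.exp (Q a) / S) * (Q a - Q' a)) +
          (Real.log S' - Real.log S) := by
        simp_rw [hlog, mul_add, Finset.sum_add_distrib, ← Finset.sum_mul, hsum1, one_mul]
    _ ≤ M + M := by
        gcongr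
        · calc ∑ a, (Real.exp (Q a) / S) * (Q a - Q' a)
              ≤ ∑ a, (Real.exp (Q a) / S) * M := by
                apply Finset.sum_le_sum
                intro a _
                exact mul_le_mul_of_nonneg_left
                  (le_trans (le_abs_self _) (hMb a)) (by positivity)
            _ = M := by rw [← Finset.sum_mul, hsum1, one_mul]
        · have hle : S' ≤ Real.exp M * S := by
            rw [Finset.mul_sum]
            apply Finset.sum_le_sum
            intro a _
            rw [← Real.exp_add]
            apply Real.exp_le_exp.mpr
            have := (abs_le.mp (hMb a)).1
            linarith
          have := Real.log_le_log hS'pos hle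
          rw [Real.log_mul (Real.exp_pos M).ne' hSpos.ne', Real.log_exp] at this
          linarith
    _ = 2 * M := by ring
end

section
/- Let A be a finite nonempty set, α > 0, and Q : A → ℝ. Let μ, π be probability distributions on A with π(a) > 0 for all a, and define π'(a) = π(a) * exp(α * Q(a)) / Σ_{a'} π(a') * exp(α * Q(a')). Then α * Σ_a Q(a) * (μ(a) - π'(a)) = KL(μ ‖ π) - KL(μ ‖ π') - KL(π' ‖ π), where KL(p ‖ q) = Σ_a p(a) log(p(a)/q(a)). -/
theorem exp_weights_kl_identity {A : Type*} [Fintype A] [Nonempty A]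
    (α : ℝ) (hα : 0 < α) (Q : A → ℝ)
    (μ π : A → ℝ) (hμnonneg : ∀ a, 0 ≤ μ a) (hμsum : ∑ a, μ a = 1)
    (hπpos : ∀ a, 0 < π a) (hπsum : ∑ a, π a = 1)
    (π' : A → ℝ)
    (hπ' : ∀ a, π' a = π a * Real.exp (α * Q a) / ∑ a', π a' * Real.exp (α * Q a')) :
    α * ∑ a, Q a * (μ a - π' a) =
      (∑ a, μ a * Real.log (μ a / π a)) - (∑ a, μ a * Real.log (μ a / π' a)) -
        ∑ a, π' a * Real.log (π' a / π a) := by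
  set Z : ℝ := ∑ a', π a' * Real.exp (α * Q a') with hZ
  have hZpos : 0 < Z :=
    Finset.sum_pos (fun a _ => mul_pos (hπpos a) (Real.exp_pos _)) Finset.univ_nonempty
  have hπ'pos : ∀ a, 0 < π' a := fun a => by
    rw [hπ' a]; exact div_pos (mul_pos (hπpos a) (Real.exp_pos _)) hZpos
  have hπ'sum : ∑ a, π' a = 1 := by
    simp only [hπ']
    rw [← Finset.sum_div, ← hZ, div_self hZpos.ne']
  have hlog : ∀ a, Real.log (π' a) - Real.log (π a) = α * Q a - Real.log Z := by
    intro a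
    rw [hπ' a, Real.log_div (mul_pos (hπpos a) (Real.exp_pos _)).ne' hZpos.ne',
      Real.log_mul (hπpos a).ne' (Real.exp_pos _).ne', Real.log_exp]
    ring
  have h1 : ∀ a, μ a * Real.log (μ a / π a) - μ a * Real.log (μ a / π' a)
      = μ a * (α * Q a - Real.log Z) := by
    intro a
    rcases eq_or_lt_of_le (hμnonneg a) with h | h
    · simp [← h]
    · rw [Real.log_div h.ne' (hπpos a).ne', Real.log_div h.ne' (hπ'pos a).ne', ← hlog a]
      ring
  have h2 : ∀ a, π' a * Real.log (π' a / π a) = π' a * (α * Q a - Real.log Z) := by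
    intro a
    rw [Real.log_div (hπ'pos a).ne' (hπpos a).ne', hlog a]
  calc α * ∑ a, Q a * (μ a - π' a)
      = ∑ a, (μ a * (α * Q a - Real.log Z) - π' a * (α * Q a - Real.log Z)) := by
        have e : ∀ a, μ a * (α * Q a - Real.log Z) - π' a * (α * Q a - Real.log Z)
            = α * (Q a * (μ a - π' a)) - Real.log Z * (μ a - π' a) := by intro a; ring
        simp only [e]
        rw [Finset.sum_sub_distrib, ← Finset.mul_sum, ← Finset.mul_sum,
          Finset.sum_sub_distrib, hμsum, hπ'sum]
        ring
    _ = (∑ a, μ a * Real.log (μ a / π a)) - (∑ a, μ a * Real.log (μ a / π' a)) -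
        ∑ a, π' a * Real.log (π' a / π a) := by
        conv_rhs => rw [← Finset.sum_sub_distrib]
        simp only [h1, h2]
        rw [Finset.sum_sub_distrib]
end

section
/- Let A be a finite nonempty set, α > 0, H > 0, and Q : A → ℝ with 0 ≤ Q(a) ≤ H for all a. Let μ, π be probability distributions on A with π strictly positive, and let π' be the exponential-weights update π'(a) ∝ π(a) exp(α Q(a)). Then Σ_a Q(a) * (μ(a) - π(a)) ≤ α*H²/2 + (KL(μ ‖ π) - KL(μ ‖ π'))/α. -/
lemma exp_le_quadratic_of_nonpos {x : ℝ} (hx : x ≤ 0) :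
    Real.exp x ≤ 1 + x + x ^ 2 / 2 := by
  have hd : ∀ y : ℝ, HasDerivAt (fun x : ℝ => Real.exp x - (1 + x + x ^ 2 / 2))
      (Real.exp y - (1 + y)) y := by
    intro y
    have h1 := Real.hasDerivAt_exp y
    have h2 : HasDerivAt (fun x : ℝ => 1 + x + x ^ 2 / 2) (0 + 1 + 2 * y ^ 1 / 2) y := by
      exact (((hasDerivAt_const y (1:ℝ)).add (hasDerivAt_id y)).add
        ((hasDerivAt_pow 2 y).div_const 2))
    have := h1.sub h2
    exact this.congr_deriv (by ring)
  have h : MonotoneOn (fun x : ℝ => Real.exp x - (1 + x + x ^ 2 / 2)) (Set.Iic 0) := by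
    apply monotoneOn_of_deriv_nonneg (convex_Iic 0)
    · fun_prop
    · exact fun y _ => (hd y).differentiableAt.differentiableWithinAt
    · intro y _
      rw [(hd y).deriv]
      have := Real.add_one_le_exp y
      linarith
  have h0 := h (Set.mem_Iic.2 hx) (Set.mem_Iic.2 le_rfl) hx
  simp only [Real.exp_zero] at h0
  nlinarith [h0]

theorem mirror_descent_one_step {A : Type*} [Fintype A] [Nonempty A]
    (α H : ℝ) (hα : 0 < α) (hH : 0 < H)
    (Q : A → ℝ) (hQ : ∀ a, 0 ≤ Q a ∧ Q a ≤ H)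
    (μ π : A → ℝ) (hμnonneg : ∀ a, 0 ≤ μ a) (hμsum : ∑ a, μ a = 1)
    (hπpos : ∀ a, 0 < π a) (hπsum : ∑ a, π a = 1)
    (π' : A → ℝ)
    (hπ' : ∀ a, π' a = π a * Real.exp (α * Q a) / ∑ a', π a' * Real.exp (α * Q a')) :
    ∑ a, Q a * (μ a - π a) ≤ α * H ^ 2 / 2 +
      ((∑ a, μ a * Real.log (μ a / π a)) - ∑ a, μ a * Real.log (μ a / π' a)) / α := by
  set Z : ℝ := ∑ a', π a' * Real.exp (α * Q a') with hZ
  have hZpos : 0 < Z := Finset.sum_pos (fun a _ => mul_pos (hπpos a) (Real.exp_pos _))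
    Finset.univ_nonempty
  -- KL difference identity
  have hdiff : (∑ a, μ a * Real.log (μ a / π a)) - ∑ a, μ a * Real.log (μ a / π' a)
      = α * (∑ a, μ a * Q a) - Real.log Z := by
    rw [← Finset.sum_sub_distrib]
    have key : ∀ a, μ a * Real.log (μ a / π a) - μ a * Real.log (μ a / π' a)
        = μ a * (α * Q a) - μ a * Real.log Z := by
      intro a
      rcases eq_or_lt_of_le (hμnonneg a) with h | h
      · simp [← h]
      · rw [← mul_sub, ← mul_sub]
        congr 1
        rw [hπ' a]
        rw [Real.log_div (ne_of_gt h) (ne_of_gt (hπpos a)),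
          Real.log_div (ne_of_gt h) (ne_of_gt (div_pos (mul_pos (hπpos a) (Real.exp_pos _)) hZpos)),
          Real.log_div (ne_of_gt (mul_pos (hπpos a) (Real.exp_pos _))) (ne_of_gt hZpos),
          Real.log_mul (ne_of_gt (hπpos a)) (ne_of_gt (Real.exp_pos _)),
          Real.log_exp]
        ring
    rw [Finset.sum_congr rfl (fun a _ => key a), Finset.sum_sub_distrib,
      ← Finset.sum_mul, hμsum, one_mul]
    congr 1
    rw [Finset.mul_sum]
    exact Finset.sum_congr rfl (fun a _ => by ring)
  -- log Z bound
  have hlogZ : Real.log Z ≤ α * (∑ a, π a * Q a) + α ^ 2 * H ^ 2 / 2 := by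
    have key : ∀ a, π a * Real.exp (α * Q a)
        ≤ Real.exp (α * H) * (π a * (1 + α * (Q a - H) + α ^ 2 * H ^ 2 / 2)) := by
      intro a
      obtain ⟨hQ0, hQH⟩ := hQ a
      have h1 : Real.exp (α * Q a) = Real.exp (α * H) * Real.exp (α * (Q a - H)) := by
        rw [← Real.exp_add]; ring_nf
      have h2 : Real.exp (α * (Q a - H)) ≤ 1 + α * (Q a - H) + (α * (Q a - H)) ^ 2 / 2 :=
        exp_le_quadratic_of_nonpos (by nlinarith)
      have h3 : (α * (Q a - H)) ^ 2 ≤ α ^ 2 * H ^ 2 := by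
        nlinarith [mul_nonneg (mul_nonneg (sq_nonneg α) hQ0) (by linarith : (0:ℝ) ≤ 2 * H - Q a)]
      have h4 : Real.exp (α * (Q a - H)) ≤ 1 + α * (Q a - H) + α ^ 2 * H ^ 2 / 2 := by
        linarith
      calc π a * Real.exp (α * Q a)
          = Real.exp (α * H) * (π a * Real.exp (α * (Q a - H))) := by rw [h1]; ring
        _ ≤ Real.exp (α * H) * (π a * (1 + α * (Q a - H) + α ^ 2 * H ^ 2 / 2)) := by
            apply mul_le_mul_of_nonneg_left _ (Real.exp_pos _).le
            exact mul_le_mul_of_nonneg_left h4 (hπpos a).le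
    have hZle : Z ≤ Real.exp (α * H) *
        (1 + α * ((∑ a, π a * Q a) - H) + α ^ 2 * H ^ 2 / 2) := by
      calc Z ≤ ∑ a, Real.exp (α * H) * (π a * (1 + α * (Q a - H) + α ^ 2 * H ^ 2 / 2)) :=
            Finset.sum_le_sum (fun a _ => key a)
        _ = Real.exp (α * H) * (1 + α * ((∑ a, π a * Q a) - H) + α ^ 2 * H ^ 2 / 2) := by
            rw [← Finset.mul_sum]
            congr 1
            have e1 : ∀ a : A, π a * (1 + α * (Q a - H) + α ^ 2 * H ^ 2 / 2)
                = π a + α * (π a * Q a) - (α * H) * π a + (α ^ 2 * H ^ 2 / 2) * π a :=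
              fun a => by ring
            rw [Finset.sum_congr rfl (fun a _ => e1 a)]
            rw [Finset.sum_add_distrib, Finset.sum_sub_distrib, Finset.sum_add_distrib,
              ← Finset.mul_sum, ← Finset.mul_sum, ← Finset.mul_sum, hπsum]
            ring
    have h4 : 1 + α * ((∑ a, π a * Q a) - H) + α ^ 2 * H ^ 2 / 2
        ≤ Real.exp (α * ((∑ a, π a * Q a) - H) + α ^ 2 * H ^ 2 / 2) := by
      have := Real.add_one_le_exp (α * ((∑ a, π a * Q a) - H) + α ^ 2 * H ^ 2 / 2)
      linarith
    have h5 : Z ≤ Real.exp (α * (∑ a, π a * Q a) + α ^ 2 * H ^ 2 / 2) := by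
      calc Z ≤ Real.exp (α * H) *
          Real.exp (α * ((∑ a, π a * Q a) - H) + α ^ 2 * H ^ 2 / 2) :=
            hZle.trans (mul_le_mul_of_nonneg_left h4 (Real.exp_pos _).le)
        _ = Real.exp (α * (∑ a, π a * Q a) + α ^ 2 * H ^ 2 / 2) := by
            rw [← Real.exp_add]; ring_nf
    calc Real.log Z ≤ Real.log (Real.exp (α * (∑ a, π a * Q a) + α ^ 2 * H ^ 2 / 2)) :=
          Real.log_le_log hZpos h5
      _ = _ := Real.log_exp _
  -- combine
  rw [hdiff]
  have hsum1 : ∑ a, Q a * (μ a - π a) = (∑ a, μ a * Q a) - ∑ a, π a * Q a := by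
    rw [← Finset.sum_sub_distrib]; exact Finset.sum_congr rfl (fun a _ => by ring)
  rw [hsum1, sub_div, mul_div_cancel_left₀ _ (ne_of_gt hα)]
  have hkey : Real.log Z / α ≤ (∑ a, π a * Q a) + α * H ^ 2 / 2 := by
    rw [div_le_iff₀ hα]
    nlinarith
  linarith
end

section
/- Let S be a set, A a finite set, H > 0, α > 0, and l ∈ ℕ⁺. For i ∈ [l] let Q_i classes of functions S × A → [0,H] with sup-distance, and let Π = { π : π(a|x) ∝ exp(α Σ_{i=1}^l Q_i(x,a)), Q_i ∈ Q_i } with distance dist(π,π') = sup_x ‖π(·|x) - π'(·|x)‖_1. Then N_{ε/(2H)}(Π) ≤ Π_{i=1}^l N_{ε²/(16 α l H²)}(Q_i). -/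
open Real Finset

lemma my_sinh_le_mul_cosh {x : ℝ} (hx : 0 ≤ x) : Real.sinh x ≤ x * Real.cosh x := by
  have key : MonotoneOn (fun y : ℝ => y * Real.cosh y - Real.sinh y) (Set.Ici 0) := by
    apply monotoneOn_of_deriv_nonneg (convex_Ici 0)
    · exact ((continuous_id.mul Real.continuous_cosh).sub Real.continuous_sinh).continuousOn
    · intro y _
      exact (((hasDerivAt_id y).mul (Real.hasDerivAt_cosh y)).sub
        (Real.hasDerivAt_sinh y)).differentiableAt.differentiableWithinAt
    · intro y hy
      rw [interior_Ici, Set.mem_Ioi] at hy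
      have hd : HasDerivAt (fun y : ℝ => y * Real.cosh y - Real.sinh y)
          (1 * Real.cosh y + y * Real.sinh y - Real.cosh y) y :=
        ((hasDerivAt_id y).mul (Real.hasDerivAt_cosh y)).sub (Real.hasDerivAt_sinh y)
      rw [hd.deriv]
      have : 0 ≤ Real.sinh y := by rw [Real.sinh_nonneg_iff]; exact hy.le
      nlinarith
  have h0 := key (Set.self_mem_Ici) (Set.mem_Ici.2 hx) hx
  simp at h0
  linarith

lemma my_exp_ineq {δ : ℝ} (hδ : 0 ≤ δ) :
    Real.exp (2 * δ) - 1 ≤ δ * (Real.exp (2 * δ) + 1) := by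
  have h := my_sinh_le_mul_cosh hδ
  rw [Real.sinh_eq, Real.cosh_eq] at h
  have hu : (0:ℝ) < Real.exp δ := Real.exp_pos δ
  have h2 : Real.exp (2 * δ) = Real.exp δ * Real.exp δ := by
    rw [← Real.exp_add]; ring_nf
  have h3 : Real.exp (-δ) * Real.exp δ = 1 := by
    rw [← Real.exp_add]; simp
  nlinarith [Real.exp_pos (-δ)]

lemma softmax_l1 {A : Type*} [Fintype A] [Nonempty A] (f g : A → ℝ) (δ : ℝ) (hδ : 0 ≤ δ)
    (h : ∀ a, |f a - g a| ≤ δ) :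
    ∑ a, |Real.exp (f a) / (∑ a', Real.exp (f a')) -
      Real.exp (g a) / (∑ a', Real.exp (g a'))| ≤ min 2 (2 * δ) := by
  set Zf := ∑ a', Real.exp (f a') with hZfdef
  set Zg := ∑ a', Real.exp (g a') with hZgdef
  have hZf : 0 < Zf := Finset.sum_pos (fun a _ => Real.exp_pos _) Finset.univ_nonempty
  have hZg : 0 < Zg := Finset.sum_pos (fun a _ => Real.exp_pos _) Finset.univ_nonempty
  set p : A → ℝ := fun a => Real.exp (f a) / Zf with hpdef
  set q : A → ℝ := fun a => Real.exp (g a) / Zg with hqdef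
  have hp : ∀ a, 0 < p a := fun a => div_pos (Real.exp_pos _) hZf
  have hq : ∀ a, 0 < q a := fun a => div_pos (Real.exp_pos _) hZg
  have hps : ∑ a, p a = 1 := by rw [hpdef, ← Finset.sum_div, div_self hZf.ne']
  have hqs : ∑ a, q a = 1 := by rw [hqdef, ← Finset.sum_div, div_self hZg.ne']
  set c := Real.exp (2 * δ) - 1 with hcdef
  have hc : 0 ≤ c := by
    have : (1:ℝ) ≤ Real.exp (2 * δ) := Real.one_le_exp (by linarith)
    linarith
  -- ratio bounds
  have ratio : ∀ (u v : A → ℝ), (∀ a, |u a - v a| ≤ δ) →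
      ∀ a, Real.exp (u a) / (∑ a', Real.exp (u a')) ≤
        Real.exp (2 * δ) * (Real.exp (v a) / (∑ a', Real.exp (v a'))) := by
    intro u v huv a
    have hZu : 0 < ∑ a', Real.exp (u a') :=
      Finset.sum_pos (fun a _ => Real.exp_pos _) Finset.univ_nonempty
    have hZv : 0 < ∑ a', Real.exp (v a') :=
      Finset.sum_pos (fun a _ => Real.exp_pos _) Finset.univ_nonempty
    have hnum : Real.exp (u a) ≤ Real.exp δ * Real.exp (v a) := by
      rw [← Real.exp_add]
      apply Real.exp_le_exp.2
      have := (abs_le.1 (huv a)).2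
      linarith
    have hden : Real.exp (-δ) * (∑ a', Real.exp (v a')) ≤ ∑ a', Real.exp (u a') := by
      rw [Finset.mul_sum]
      apply Finset.sum_le_sum
      intro b _
      rw [← Real.exp_add]
      apply Real.exp_le_exp.2
      have := (abs_le.1 (huv b)).1
      linarith
    have hden' : 0 < Real.exp (-δ) * (∑ a', Real.exp (v a')) :=
      mul_pos (Real.exp_pos _) hZv
    calc Real.exp (u a) / (∑ a', Real.exp (u a'))
        ≤ (Real.exp δ * Real.exp (v a)) / (Real.exp (-δ) * (∑ a', Real.exp (v a'))) :=
          div_le_div₀ (by positivity) hnum hden' hden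
      _ = Real.exp (2 * δ) * (Real.exp (v a) / (∑ a', Real.exp (v a'))) := by
          have h2 : Real.exp δ * Real.exp δ = Real.exp (2 * δ) := by
            rw [← Real.exp_add]; ring_nf
          rw [Real.exp_neg]
          field_simp
          linear_combination h2
  have hpq : ∀ a, p a ≤ Real.exp (2 * δ) * q a := ratio f g h
  have hqp : ∀ a, q a ≤ Real.exp (2 * δ) * p a := by
    apply ratio g f
    intro a; rw [abs_sub_comm]; exact h a
  -- pointwise bound
  have point : ∀ a, |p a - q a| ≤ c * ((p a + q a - |p a - q a|) / 2) := by
    intro a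
    rcases le_total (p a) (q a) with hle | hle
    · rw [abs_of_nonpos (by linarith)]
      have := hqp a
      have := hp a
      nlinarith
    · rw [abs_of_nonneg (by linarith)]
      have := hpq a
      have := hq a
      nlinarith
  set s := ∑ a, |p a - q a| with hsdef
  have hs2 : s ≤ 2 := by
    have : ∀ a, |p a - q a| ≤ p a + q a := by
      intro a
      have := (hp a).le; have := (hq a).le
      rw [abs_sub_le_iff]; constructor <;> linarith
    calc s ≤ ∑ a, (p a + q a) := Finset.sum_le_sum (fun a _ => this a)
      _ = 2 := by rw [Finset.sum_add_distrib, hps, hqs]; norm_num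
  have hkey : s ≤ c * ((2 - s) / 2) := by
    calc s ≤ ∑ a, c * ((p a + q a - |p a - q a|) / 2) :=
          Finset.sum_le_sum (fun a _ => point a)
      _ = c * ((2 - s) / 2) := by
          rw [← Finset.mul_sum]
          congr 1
          rw [← Finset.sum_div]
          congr 1
          rw [Finset.sum_sub_distrib, Finset.sum_add_distrib, hps, hqs, ← hsdef]
          ring
  have hcineq : c ≤ δ * (c + 2) := by
    have := my_exp_ineq hδ
    rw [hcdef]; linarith
  have hs2δ : s ≤ 2 * δ := by nlinarith
  exact le_min hs2 hs2δ

theorem covering_softmax_policy_class {S A : Type*} [Fintype A] [Nonempty A]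
    (H α ε : ℝ) (hH : 0 < H) (hα : 0 < α) (hε : 0 < ε)
    (l : ℕ) (hl : 0 < l)
    (𝒬 : Fin l → Set (S → A → ℝ))
    (h𝒬 : ∀ i, ∀ Q ∈ 𝒬 i, ∀ x a, 0 ≤ Q x a ∧ Q x a ≤ H)
    (C : Fin l → Finset (S → A → ℝ)) (hCsub : ∀ i, ↑(C i) ⊆ 𝒬 i)
    (hCnet : ∀ i, ∀ Q ∈ 𝒬 i, ∃ Q' ∈ C i,
      ∀ x a, |Q x a - Q' x a| ≤ ε ^ 2 / (16 * α * l * H ^ 2)) :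
    ∃ CP : Finset (S → A → ℝ), CP.card ≤ ∏ i, (C i).card ∧
      ∀ Q : Fin l → (S → A → ℝ), (∀ i, Q i ∈ 𝒬 i) →
        ∃ π' ∈ CP, ∀ x, ∑ a,
          |Real.exp (α * ∑ i, Q i x a) / (∑ a', Real.exp (α * ∑ i, Q i x a')) -
            π' x a| ≤ ε / (2 * H) := by
  classical
  set sm : (Fin l → S → A → ℝ) → S → A → ℝ :=
    fun Q x a => Real.exp (α * ∑ i, Q i x a) / ∑ a', Real.exp (α * ∑ i, Q i x a') with hsm
  refine ⟨(Fintype.piFinset C).image sm, ?_, ?_⟩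
  · calc ((Fintype.piFinset C).image sm).card ≤ (Fintype.piFinset C).card :=
        Finset.card_image_le
      _ = ∏ i, (C i).card := Fintype.card_piFinset C
  · intro Q hQ
    choose Q' hQ'mem hQ'close using fun i => hCnet i (Q i) (hQ i)
    refine ⟨sm Q', Finset.mem_image_of_mem _ (Fintype.mem_piFinset.2 hQ'mem), ?_⟩
    intro x
    set δ0 := ε ^ 2 / (16 * H ^ 2) with hδ0
    have hδ0pos : 0 < δ0 := by positivity
    have hclose : ∀ a, |α * ∑ i, Q i x a - α * ∑ i, Q' i x a| ≤ δ0 := by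
      intro a
      rw [← mul_sub, ← Finset.sum_sub_distrib, abs_mul, abs_of_pos hα]
      have h1 : |∑ i, (Q i x a - Q' i x a)| ≤ ∑ i : Fin l, ε ^ 2 / (16 * α * l * H ^ 2) := by
        refine (Finset.abs_sum_le_sum_abs _ _).trans ?_
        exact Finset.sum_le_sum (fun i _ => hQ'close i x a)
      rw [Finset.sum_const, Finset.card_univ, Fintype.card_fin, nsmul_eq_mul] at h1
      have hle := mul_le_mul_of_nonneg_left h1 hα.le
      have hl' : (0:ℝ) < l := by exact_mod_cast hl
      have heq : α * ((l : ℝ) * (ε ^ 2 / (16 * α * l * H ^ 2))) = δ0 := by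
        rw [hδ0]; field_simp
      exact le_trans hle (le_of_eq heq)
    have key := softmax_l1 (fun a => α * ∑ i, Q i x a) (fun a => α * ∑ i, Q' i x a)
      δ0 hδ0pos.le hclose
    refine le_trans key ?_
    rcases le_total ε (4 * H) with hc | hc
    · refine (min_le_right _ _).trans ?_
      rw [hδ0]
      have h8 : 2 * (ε ^ 2 / (16 * H ^ 2)) = ε ^ 2 / (8 * H ^ 2) := by ring
      rw [h8, div_le_div_iff₀ (by positivity) (by positivity)]
      nlinarith [mul_nonneg (mul_nonneg (by linarith : (0:ℝ) ≤ 2 * H) hε.le)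
        (by linarith : (0:ℝ) ≤ 4 * H - ε)]
    · refine (min_le_left _ _).trans ?_
      rw [le_div_iff₀ (by positivity)]
      linarith
end

section
/- Let Λ and Λ' be positive definite d × d real matrices with Λ ⪯ Λ' (i.e., Λ' - Λ is positive semidefinite). Then for every nonzero x ∈ ℝ^d, det(Λ')/det(Λ) ≥ (xᵀ Λ' x)/(xᵀ Λ x). -/
open Matrix

private lemma dot_shift (d : ℕ) (M : Matrix (Fin d) (Fin d) ℝ) (a b : Fin d → ℝ) :
    (M *ᵥ a) ⬝ᵥ b = a ⬝ᵥ (Mᵀ *ᵥ b) := by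
  rw [dotProduct_comm, dotProduct_mulVec, mulVec_transpose, dotProduct_comm]

private lemma rayleigh_le_det (d : ℕ) (A : Matrix (Fin d) (Fin d) ℝ)
    (hA : A.IsHermitian) (h1 : (A - 1).PosSemidef) (y : Fin d → ℝ) :
    y ⬝ᵥ A *ᵥ y ≤ A.det * (y ⬝ᵥ y) := by
  classical
  set μ := hA.eigenvalues with hμ
  have hev : ∀ i, 1 ≤ μ i := by
    intro i
    set v : Fin d → ℝ := ⇑(hA.eigenvectorBasis i) with hv
    have hvv : v ⬝ᵥ v = 1 := by
      have hn : ‖hA.eigenvectorBasis i‖ = 1 := hA.eigenvectorBasis.orthonormal.1 i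
      have : (inner ℝ (hA.eigenvectorBasis i) (hA.eigenvectorBasis i) : ℝ) = 1 := by
        rw [real_inner_self_eq_norm_sq, hn]; norm_num
      rw [EuclideanSpace.inner_eq_star_dotProduct] at this
      simpa [hv, dotProduct_comm] using this
    have hpsd := h1.dotProduct_mulVec_nonneg v
    have heig : μ i = v ⬝ᵥ A *ᵥ v := by
      simpa [hv] using hA.eigenvalues_eq i
    have : 0 ≤ v ⬝ᵥ A *ᵥ v - v ⬝ᵥ v := by
      simpa [sub_mulVec, dotProduct_sub, one_mulVec] using hpsd
    rw [heig]
    linarith [hvv ▸ this]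
  set U : Matrix (Fin d) (Fin d) ℝ := (hA.eigenvectorUnitary : Matrix (Fin d) (Fin d) ℝ)
    with hU
  have hUU : U * star U = 1 := (Matrix.mem_unitaryGroup_iff).mp hA.eigenvectorUnitary.2
  have hUt : Uᵀ = star U := by
    rw [star_eq_conjTranspose, conjTranspose_eq_transpose_of_trivial]
  set z : Fin d → ℝ := star U *ᵥ y with hz
  have hspec : A = U * diagonal (RCLike.ofReal ∘ μ) * star U := hA.spectral_theorem
  have hDiag : (RCLike.ofReal ∘ μ : Fin d → ℝ) = μ := by
    funext i; simp [RCLike.ofReal]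
  have hyAy : y ⬝ᵥ A *ᵥ y = ∑ i, μ i * z i ^ 2 := by
    conv_lhs => rw [hspec]
    rw [hDiag, ← mulVec_mulVec, ← mulVec_mulVec, dotProduct_comm,
      dot_shift, hUt, ← hz]
    rw [dotProduct_comm]
    simp only [dotProduct, mulVec_diagonal]
    exact Finset.sum_congr rfl fun i _ => by ring
  have hyy : y ⬝ᵥ y = ∑ i, z i ^ 2 := by
    have h2 : z ⬝ᵥ z = y ⬝ᵥ y := by
      rw [hz, dot_shift]
      have : (star U)ᵀ = U := by
        rw [← hUt, transpose_transpose]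
      rw [this, mulVec_mulVec, hUU, one_mulVec]
    rw [← h2]
    simp [dotProduct, sq]
  have hdet : A.det = ∏ i, μ i := by
    simpa using hA.det_eq_prod_eigenvalues
  rw [hyAy, hyy, hdet, Finset.mul_sum]
  apply Finset.sum_le_sum
  intro i _
  have h1i : μ i ≤ ∏ j, μ j := by
    have heq : (∏ j, (if j = i then μ j else 1)) = μ i := by
      rw [Finset.prod_ite_eq' Finset.univ i μ]
      simp
    rw [← heq]
    apply Finset.prod_le_prod
    · intro j _
      split_ifs with h
      · linarith [hev j]
      · norm_num
    · intro j _
      split_ifs with h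
      · exact le_refl _
      · exact hev j
  exact mul_le_mul_of_nonneg_right h1i (sq_nonneg _)

theorem det_ratio_ge_quadratic_ratio (d : ℕ)
    (Λ Λ' : Matrix (Fin d) (Fin d) ℝ)
    (hΛ : Λ.PosDef) (hΛ' : Λ'.PosDef) (hle : (Λ' - Λ).PosSemidef)
    (x : Fin d → ℝ) (hx : x ≠ 0) :
    (x ⬝ᵥ Λ' *ᵥ x) / (x ⬝ᵥ Λ *ᵥ x) ≤ Λ'.det / Λ.det := by
  classical
  open scoped MatrixOrder in
  set S := CFC.sqrt Λ with hS
  have hSH : S.IsHermitian := by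
    open scoped MatrixOrder in
    exact (Matrix.nonneg_iff_posSemidef.mp (CFC.sqrt_nonneg Λ)).1
  have hSt : Sᵀ = S := by
    rw [← conjTranspose_eq_transpose_of_trivial, hSH.eq]
  have hSS : S * S = Λ := by
    open scoped MatrixOrder in
    exact CFC.sqrt_mul_sqrt_self Λ (Matrix.nonneg_iff_posSemidef.mpr hΛ.posSemidef)
  have hdetS : S.det * S.det = Λ.det := by rw [← det_mul, hSS]
  have hdetΛ : (0:ℝ) < Λ.det := hΛ.det_pos
  have hdS : S.det ≠ 0 := by
    intro h; rw [h, mul_zero] at hdetS; exact hdetΛ.ne' hdetS.symm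
  set T := S⁻¹ with hT
  have hTS : T * S = 1 := nonsing_inv_mul S hdS.isUnit
  have hST : S * T = 1 := mul_nonsing_inv S hdS.isUnit
  have hTH : T.IsHermitian := hSH.inv
  set A := T * Λ' * T with hA
  have hAH : A.IsHermitian := by
    rw [Matrix.IsHermitian, hA, conjTranspose_mul, conjTranspose_mul, hTH.eq,
      hΛ'.isHermitian.eq, mul_assoc]
  have hTΛT : T * Λ * T = 1 := by
    rw [← hSS, ← mul_assoc T S S, mul_assoc (T * S) S T, hTS, hST, one_mul]
  have h1 : (A - 1).PosSemidef := by
    have h : A - 1 = T * (Λ' - Λ) * Tᴴ := by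
      rw [hTH.eq, Matrix.mul_sub, Matrix.sub_mul, hA, hTΛT]
    rw [h]
    exact hle.mul_mul_conjTranspose_same T
  set y := S *ᵥ x with hy
  have hquad' : y ⬝ᵥ A *ᵥ y = x ⬝ᵥ Λ' *ᵥ x := by
    rw [hy, hA, mulVec_mulVec, mul_assoc (T * Λ') T S, hTS, mul_one,
      dot_shift, hSt, mulVec_mulVec, ← mul_assoc, hST, one_mul]
  have hquad : y ⬝ᵥ y = x ⬝ᵥ Λ *ᵥ x := by
    rw [hy, dot_shift, hSt, mulVec_mulVec, hSS]
  have hdetA : A.det = Λ'.det / Λ.det := by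
    rw [hA, det_mul, det_mul, hT, det_nonsing_inv, ← hdetS]
    have hR : Ring.inverse S.det = (S.det)⁻¹ := Ring.inverse_eq_inv _
    rw [hR]
    field_simp
  have key := rayleigh_le_det d A hAH h1 y
  rw [hquad', hquad, hdetA] at key
  have hxΛx : (0:ℝ) < x ⬝ᵥ Λ *ᵥ x := by
    have := hΛ.dotProduct_mulVec_pos hx
    simpa using this
  rw [div_le_div_iff₀ hxΛx hdetΛ]
  rw [div_mul_eq_mul_div, le_div_iff₀ hdetΛ] at key
  nlinarith [key, hdetΛ, hxΛx]
end

section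
/- Let {φ_t}_{t≥1} ⊂ ℝ^d with ‖φ_t‖_2 ≤ 1, let Λ_0 be positive definite with λ_min(Λ_0) ≥ 1, and Λ_t = Λ_0 + Σ_{i=1}^{t-1} φ_i φ_iᵀ. Then for every t, log(det(Λ_{t+1})/det(Λ_1)) ≤ Σ_{i=1}^t φ_iᵀ Λ_i^{-1} φ_i ≤ 2 log(det(Λ_{t+1})/det(Λ_1)). -/
open Matrix

private lemma vecMulVec_self_posSemidef {d : ℕ} (v : Fin d → ℝ) :
    (vecMulVec v v).PosSemidef := by
  refine PosSemidef.of_dotProduct_mulVec_nonneg ?_ ?_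
  · ext i j; simp [conjTranspose_apply, vecMulVec_apply, mul_comm]
  · intro x
    have h : (vecMulVec v v) *ᵥ x = fun i => v i * (v ⬝ᵥ x) := by
      ext i; simp [mulVec, vecMulVec_apply, dotProduct, Finset.mul_sum, mul_assoc]
    rw [h]
    have : star x ⬝ᵥ (fun i => v i * (v ⬝ᵥ x)) = (v ⬝ᵥ x) ^ 2 := by
      simp only [dotProduct, Pi.star_apply, star_trivial, sq, Finset.sum_mul]
      exact Finset.sum_congr rfl fun i _ => by ring
    rw [this]; positivity

private lemma det_lemma {d : ℕ} (A : Matrix (Fin d) (Fin d) ℝ) (hA : IsUnit A.det)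
    (v : Fin d → ℝ) : (A + vecMulVec v v).det = A.det * (1 + v ⬝ᵥ A⁻¹ *ᵥ v) := by
  rw [vecMulVec_eq Unit, det_add_replicateCol_mul_replicateRow hA]
  congr 1
  rw [Matrix.mul_assoc, ← replicateCol_mulVec, replicateRow_mul_replicateCol, det_unique]
  simp

private lemma log_bound {u : ℝ} (h0 : 0 ≤ u) (h1 : u ≤ 1) :
    u ≤ 2 * Real.log (1 + u) := by
  have hp : (0 : ℝ) < 1 + u := by linarith
  have h2 := Real.log_le_sub_one_of_pos (inv_pos.mpr hp)
  rw [Real.log_inv] at h2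
  have h3 : (1 + u)⁻¹ * (1 + u) = 1 := inv_mul_cancel₀ hp.ne'
  nlinarith [mul_nonneg h0 (sub_nonneg.mpr h1)]

theorem elliptical_potential (d : ℕ) (φ : ℕ → Fin d → ℝ)
    (hφ : ∀ t, Real.sqrt (∑ i, φ t i ^ 2) ≤ 1)
    (Λ₀ : Matrix (Fin d) (Fin d) ℝ) (hΛ₀ : Λ₀.PosDef)
    (hmin : (Λ₀ - (1 : Matrix (Fin d) (Fin d) ℝ)).PosSemidef)
    (Λ : ℕ → Matrix (Fin d) (Fin d) ℝ)
    (hΛ : ∀ t, Λ t = Λ₀ + ∑ i ∈ Finset.range t, vecMulVec (φ i) (φ i)) :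
    ∀ t : ℕ,
      Real.log ((Λ t).det / (Λ 0).det) ≤
          ∑ i ∈ Finset.range t, φ i ⬝ᵥ (Λ i)⁻¹ *ᵥ φ i ∧
        ∑ i ∈ Finset.range t, φ i ⬝ᵥ (Λ i)⁻¹ *ᵥ φ i ≤
          2 * Real.log ((Λ t).det / (Λ 0).det) := by
  have hSpsd : ∀ t, (∑ i ∈ Finset.range t, vecMulVec (φ i) (φ i)).PosSemidef := by
    intro t
    induction t with
    | zero => simpa using (Matrix.PosSemidef.zero (n := Fin d) (R := ℝ))
    | succ n ih =>
      rw [Finset.sum_range_succ]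
      exact ih.add (vecMulVec_self_posSemidef _)
  have hpos : ∀ t, (Λ t).PosDef := fun t => by
    rw [hΛ]; exact hΛ₀.add_posSemidef (hSpsd t)
  have hdetpos : ∀ t, 0 < (Λ t).det := fun t => (hpos t).det_pos
  have hunit : ∀ t, IsUnit (Λ t).det := fun t => (hdetpos t).ne'.isUnit
  set u : ℕ → ℝ := fun i => φ i ⬝ᵥ (Λ i)⁻¹ *ᵥ φ i with hu
  have hu0 : ∀ i, 0 ≤ u i := by
    intro i
    have h := ((hpos i).inv).posSemidef.dotProduct_mulVec_nonneg (φ i)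
    simpa using h
  have hφsq : ∀ i, φ i ⬝ᵥ φ i ≤ 1 := by
    intro i
    have h := hφ i
    have hnn : (0:ℝ) ≤ ∑ j, φ i j ^ 2 := Finset.sum_nonneg fun j _ => sq_nonneg _
    have hs : ∑ j, φ i j ^ 2 ≤ 1 := by
      nlinarith [Real.sq_sqrt hnn, Real.sqrt_nonneg (∑ j, φ i j ^ 2)]
    calc φ i ⬝ᵥ φ i = ∑ j, φ i j ^ 2 := by
          simp [dotProduct, sq]
      _ ≤ 1 := hs
  have hu1 : ∀ i, u i ≤ 1 := by
    intro i
    set ψ : Fin d → ℝ := (Λ i)⁻¹ *ᵥ φ i with hψ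
    have hΛψ : Λ i *ᵥ ψ = φ i := by
      rw [hψ, mulVec_mulVec, Matrix.mul_nonsing_inv _ (hunit i), one_mulVec]
    have hsub : (Λ i - 1).PosSemidef := by
      have heq : Λ i - 1 = (Λ₀ - 1) + ∑ j ∈ Finset.range i, vecMulVec (φ j) (φ j) := by
        rw [hΛ]; abel
      rw [heq]; exact hmin.add (hSpsd i)
    have h1 : ψ ⬝ᵥ ψ ≤ u i := by
      have h := hsub.dotProduct_mulVec_nonneg ψ
      simp only [star_trivial, sub_mulVec, one_mulVec, dotProduct_sub, hΛψ] at h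
      have hcomm : ψ ⬝ᵥ φ i = u i := by rw [dotProduct_comm]
      linarith [h, hcomm ▸ h]
    have h2 : (u i) ^ 2 ≤ (φ i ⬝ᵥ φ i) * (ψ ⬝ᵥ ψ) := by
      have hcs := Finset.sum_mul_sq_le_sq_mul_sq Finset.univ (φ i) ψ
      have e1 : u i = ∑ j, φ i j * ψ j := rfl
      have e2 : φ i ⬝ᵥ φ i = ∑ j, φ i j ^ 2 := by simp [dotProduct, sq]
      have e3 : ψ ⬝ᵥ ψ = ∑ j, ψ j ^ 2 := by simp [dotProduct, sq]
      rw [e1, e2, e3]; exact hcs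
    have hψnn : 0 ≤ ψ ⬝ᵥ ψ := by
      have : ψ ⬝ᵥ ψ = ∑ j, ψ j ^ 2 := by simp [dotProduct, sq]
      rw [this]; exact Finset.sum_nonneg fun j _ => sq_nonneg _
    nlinarith [hu0 i, h1, h2, hφsq i, hψnn]
  have hdet : ∀ t, (Λ (t + 1)).det = (Λ t).det * (1 + u t) := by
    intro t
    have heq : Λ (t + 1) = Λ t + vecMulVec (φ t) (φ t) := by
      rw [hΛ, hΛ, Finset.sum_range_succ, add_assoc]
    rw [heq, det_lemma _ (hunit t)]
  have hlog : ∀ t, Real.log ((Λ t).det / (Λ 0).det) =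
      ∑ i ∈ Finset.range t, Real.log (1 + u i) := by
    intro t
    induction t with
    | zero => simp [div_self (hdetpos 0).ne']
    | succ n ih =>
      have hpn : (0:ℝ) < 1 + u n := by linarith [hu0 n]
      rw [Finset.sum_range_succ, ← ih, hdet n, mul_div_right_comm,
        Real.log_mul (div_pos (hdetpos n) (hdetpos 0)).ne' hpn.ne']
  intro t
  constructor
  · rw [hlog]
    apply Finset.sum_le_sum
    intro i _
    have hpi : (0:ℝ) < 1 + u i := by linarith [hu0 i]
    have := Real.log_le_sub_one_of_pos hpi
    linarith
  · rw [hlog, Finset.mul_sum]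
    exact Finset.sum_le_sum fun i _ => log_bound (hu0 i) (hu1 i)
end

section
/- Let φ_1, …, φ_K ∈ ℝ^d with ‖φ_k‖_2 ≤ 1 and λ > 0. Define Λ_k = λ I_d + Σ_{τ=1}^{k-1} φ_τ φ_τᵀ. Then Σ_{k=1}^K sqrt(φ_kᵀ Λ_k^{-1} φ_k) ≤ sqrt(2 d K log((K+λ)/λ)), provided λ ≥ 1. -/
open Matrix Finset

private lemma aux_sum_mulVec {d : ℕ} {ι : Type*} (s : Finset ι)
    (M : ι → Matrix (Fin d) (Fin d) ℝ) (y : Fin d → ℝ) :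
    (∑ τ ∈ s, M τ) *ᵥ y = ∑ τ ∈ s, M τ *ᵥ y := by
  ext i
  simp only [Matrix.mulVec, dotProduct, Matrix.sum_apply, Finset.sum_apply, Finset.sum_mul]
  rw [Finset.sum_comm]

private lemma aux_vecMulVec_mulVec {d : ℕ} (u v y : Fin d → ℝ) :
    vecMulVec u v *ᵥ y = (v ⬝ᵥ y) • u := by
  ext i
  simp [Matrix.mulVec, Matrix.vecMulVec_apply, dotProduct, Finset.mul_sum,
    mul_assoc, mul_comm, mul_left_comm]

private lemma aux_dotProduct_sum {d : ℕ} {ι : Type*} (s : Finset ι)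
    (v : Fin d → ℝ) (f : ι → Fin d → ℝ) :
    v ⬝ᵥ (∑ τ ∈ s, f τ) = ∑ τ ∈ s, v ⬝ᵥ f τ := by
  simp only [dotProduct, Finset.sum_apply, Finset.mul_sum]
  rw [Finset.sum_comm]

private lemma aux_two_log {x : ℝ} (h0 : 0 ≤ x) (h1 : x ≤ 1) :
    x ≤ 2 * Real.log (1 + x) := by
  have hx1 : (0:ℝ) < 1 + x := by linarith
  have key : Real.exp (x / 2) ≤ 1 + x := by
    have h2 := Real.add_one_le_exp (-(x / 2))
    have h3 : (1 - x / 2) * Real.exp (x / 2) ≤ 1 := by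
      have := mul_le_mul_of_nonneg_right h2 (Real.exp_pos (x / 2)).le
      rwa [← Real.exp_add, neg_add_cancel, Real.exp_zero, neg_add_eq_sub] at this
    nlinarith [Real.exp_pos (x / 2), sq_nonneg x]
  have := (Real.le_log_iff_exp_le hx1).mpr key
  linarith

theorem sum_sqrt_bonus_bound (d K : ℕ) (lam : ℝ) (hlam : 1 ≤ lam)
    (φ : ℕ → Fin d → ℝ) (hφ : ∀ k, Real.sqrt (∑ i, φ k i ^ 2) ≤ 1)
    (Λ : ℕ → Matrix (Fin d) (Fin d) ℝ)
    (hΛ : ∀ k, Λ k = lam • (1 : Matrix (Fin d) (Fin d) ℝ) +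
        ∑ τ ∈ Finset.range k, vecMulVec (φ τ) (φ τ)) :
    ∑ k ∈ Finset.range K, Real.sqrt (φ k ⬝ᵥ (Λ k)⁻¹ *ᵥ φ k) ≤
      Real.sqrt (2 * d * K * Real.log ((K + lam) / lam)) := by
  have hlam0 : (0:ℝ) < lam := lt_of_lt_of_le one_pos hlam
  have hφ' : ∀ k, ∑ i, φ k i ^ 2 ≤ 1 := by
    intro k
    have h0 : 0 ≤ ∑ i, φ k i ^ 2 := Finset.sum_nonneg fun i _ => sq_nonneg _
    calc ∑ i, φ k i ^ 2 = Real.sqrt (∑ i, φ k i ^ 2) ^ 2 := (Real.sq_sqrt h0).symm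
      _ ≤ 1 := by nlinarith [Real.sqrt_nonneg (∑ i, φ k i ^ 2), hφ k]
  have hCS : ∀ k (y : Fin d → ℝ), (φ k ⬝ᵥ y) ^ 2 ≤ ∑ i, y i ^ 2 := by
    intro k y
    have h := Finset.sum_mul_sq_le_sq_mul_sq Finset.univ (φ k) y
    have h2 : (∑ i, φ k i ^ 2) * (∑ i, y i ^ 2) ≤ 1 * (∑ i, y i ^ 2) :=
      mul_le_mul_of_nonneg_right (hφ' k) (Finset.sum_nonneg fun i _ => sq_nonneg _)
    calc (φ k ⬝ᵥ y) ^ 2 = (∑ i, φ k i * y i) ^ 2 := rfl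
      _ ≤ (∑ i, φ k i ^ 2) * (∑ i, y i ^ 2) := h
      _ ≤ 1 * (∑ i, y i ^ 2) := h2
      _ = ∑ i, y i ^ 2 := one_mul _
  have hquad : ∀ k (y : Fin d → ℝ),
      y ⬝ᵥ (Λ k *ᵥ y) = lam * (∑ i, y i ^ 2) + ∑ τ ∈ Finset.range k, (φ τ ⬝ᵥ y) ^ 2 := by
    intro k y
    rw [hΛ k, Matrix.add_mulVec, dotProduct_add, aux_sum_mulVec,
      aux_dotProduct_sum]
    congr 1
    · rw [Matrix.smul_mulVec, Matrix.one_mulVec, dotProduct_smul, smul_eq_mul]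
      congr 1
      exact Finset.sum_congr rfl fun i _ => (pow_two (y i)).symm
    · refine Finset.sum_congr rfl fun τ _ => ?_
      rw [aux_vecMulVec_mulVec, dotProduct_smul, smul_eq_mul,
        dotProduct_comm]
      ring
  have herm : ∀ k, (Λ k).IsHermitian := by
    intro k
    rw [hΛ k]
    unfold Matrix.IsHermitian
    rw [Matrix.conjTranspose_add, Matrix.conjTranspose_smul, Matrix.conjTranspose_one,
      Matrix.conjTranspose_sum, star_trivial]
    congr 1
    refine Finset.sum_congr rfl fun τ _ => ?_
    ext i j
    simp [Matrix.conjTranspose_apply, Matrix.vecMulVec_apply, mul_comm]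
  have hpd : ∀ k, (Λ k).PosDef := by
    intro k
    refine Matrix.PosDef.of_dotProduct_mulVec_pos (herm k) fun x hx => ?_
    have hx2 : 0 < ∑ i, x i ^ 2 := by
      rcases Function.ne_iff.mp hx with ⟨i, hi⟩
      exact Finset.sum_pos' (fun j _ => sq_nonneg _) ⟨i, Finset.mem_univ i, by rwa [sq_pos_iff]⟩
    have h := hquad k x
    have hstar : star x = x := star_trivial x
    rw [hstar, h]
    have h5 : 0 ≤ ∑ τ ∈ Finset.range k, (φ τ ⬝ᵥ x) ^ 2 :=
      Finset.sum_nonneg fun τ _ => sq_nonneg _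
    have h6 : 0 < lam * ∑ i, x i ^ 2 := mul_pos hlam0 hx2
    linarith
  have hdetpos : ∀ k, 0 < (Λ k).det := fun k => (hpd k).det_pos
  set x : ℕ → ℝ := fun k => φ k ⬝ᵥ (Λ k)⁻¹ *ᵥ φ k with hxdef
  have hx0 : ∀ k, 0 ≤ x k := by
    intro k
    have h := ((hpd k).inv).posSemidef.re_dotProduct_nonneg (φ k)
    simpa using h
  have hx1 : ∀ k, x k ≤ 1 := by
    intro k
    set y := (Λ k)⁻¹ *ᵥ φ k with hy
    have hΛy : Λ k *ᵥ y = φ k := by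
      rw [hy, Matrix.mulVec_mulVec, Matrix.mul_nonsing_inv _ (hdetpos k).ne'.isUnit,
        Matrix.one_mulVec]
    have hxy : x k = φ k ⬝ᵥ y := rfl
    have h1 : x k = y ⬝ᵥ (Λ k *ᵥ y) := by
      rw [hΛy, dotProduct_comm, hxy]
    have h2 := hquad k y
    have hS : lam * (∑ i, y i ^ 2) ≤ x k := by
      rw [h1, h2]
      have : 0 ≤ ∑ τ ∈ Finset.range k, (φ τ ⬝ᵥ y) ^ 2 :=
        Finset.sum_nonneg fun τ _ => sq_nonneg _
      linarith
    have h3 : (x k) ^ 2 ≤ ∑ i, y i ^ 2 := by rw [hxy]; exact hCS k y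
    nlinarith [hx0 k, sq_nonneg (x k - 1)]
  have hdet : ∀ k, (Λ (k + 1)).det = (Λ k).det * (1 + x k) := by
    intro k
    have h1 : Λ (k + 1) = Λ k + replicateCol Unit (φ k) * replicateRow Unit (φ k) := by
      rw [hΛ, hΛ, Finset.sum_range_succ, ← add_assoc, Matrix.vecMulVec_eq Unit]
    rw [h1, Matrix.det_add_replicateCol_mul_replicateRow (hdetpos k).ne'.isUnit]
    congr 1
    rw [Matrix.det_unique]
    rw [Matrix.mul_assoc, ← Matrix.replicateCol_mulVec]
    simp [Matrix.one_apply]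
    rfl
  have htel : ∑ k ∈ Finset.range K, Real.log (1 + x k) =
      Real.log (Λ K).det - Real.log (Λ 0).det := by
    rw [← Finset.sum_range_sub (fun k => Real.log (Λ k).det)]
    refine Finset.sum_congr rfl fun k _ => ?_
    rw [hdet k, Real.log_mul (hdetpos k).ne' (by have := hx0 k; positivity)]
    ring
  have hdet0 : (Λ 0).det = lam ^ d := by
    rw [hΛ 0]
    simp [Matrix.det_smul]
  have hdetK : (Λ K).det ≤ (K + lam) ^ d := by
    have heig : ∀ i, (herm K).eigenvalues i ≤ K + lam := by
      intro i
      set v : Fin d → ℝ := ⇑((herm K).eigenvectorBasis i) with hv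
      have hnorm : ‖(herm K).eigenvectorBasis i‖ = 1 :=
        (herm K).eigenvectorBasis.orthonormal.1 i
      have hv2 : ∑ j, v j ^ 2 = 1 := by
        have h := EuclideanSpace.norm_eq ((herm K).eigenvectorBasis i)
        rw [hnorm] at h
        have h2 : Real.sqrt (∑ j, ‖((herm K).eigenvectorBasis i) j‖ ^ 2) = 1 := h.symm
        have h3 : (∑ j, ‖((herm K).eigenvectorBasis i) j‖ ^ 2) = 1 := by
          have h0 : 0 ≤ ∑ j, ‖((herm K).eigenvectorBasis i) j‖ ^ 2 :=
            Finset.sum_nonneg fun j _ => sq_nonneg _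
          nlinarith [Real.sq_sqrt h0]
        simpa [hv, Real.norm_eq_abs, sq_abs] using h3
      have he := (herm K).eigenvalues_eq i
      rw [he]
      have hstar : star v = v := star_trivial v
      have : (star v) ⬝ᵥ (Λ K *ᵥ v) = lam * (∑ j, v j ^ 2) +
          ∑ τ ∈ Finset.range K, (φ τ ⬝ᵥ v) ^ 2 := by
        rw [hstar]; exact hquad K v
      rw [show (dotProduct (star ⇑((herm K).eigenvectorBasis i))
          (Λ K *ᵥ ⇑((herm K).eigenvectorBasis i))) = (star v) ⬝ᵥ (Λ K *ᵥ v) from rfl, this]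
      simp only [RCLike.re_to_real]
      have hb : ∑ τ ∈ Finset.range K, (φ τ ⬝ᵥ v) ^ 2 ≤ K := by
        calc ∑ τ ∈ Finset.range K, (φ τ ⬝ᵥ v) ^ 2 ≤ ∑ τ ∈ Finset.range K, 1 := by
              refine Finset.sum_le_sum fun τ _ => ?_
              have := hCS τ v
              rw [hv2] at this
              linarith
          _ = K := by simp
      rw [hv2]
      linarith
    have hprod := (herm K).det_eq_prod_eigenvalues
    rw [hprod]
    have : ∏ i, ((herm K).eigenvalues i : ℝ) ≤ ∏ _i : Fin d, (K + lam) :=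
      Finset.prod_le_prod (fun i _ => (hpd K).posSemidef.eigenvalues_nonneg i)
        (fun i _ => heig i)
    simpa using this
  have hS : ∑ k ∈ Finset.range K, x k ≤ 2 * d * Real.log ((K + lam) / lam) := by
    have h1 : ∑ k ∈ Finset.range K, x k ≤
        ∑ k ∈ Finset.range K, 2 * Real.log (1 + x k) :=
      Finset.sum_le_sum fun k _ => aux_two_log (hx0 k) (hx1 k)
    have h2 : ∑ k ∈ Finset.range K, 2 * Real.log (1 + x k) =
        2 * (Real.log (Λ K).det - Real.log (Λ 0).det) := by
      rw [← Finset.mul_sum, htel]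
    have h3 : Real.log (Λ K).det ≤ d * Real.log (K + lam) := by
      calc Real.log (Λ K).det ≤ Real.log ((K + lam) ^ d) :=
            Real.log_le_log (hdetpos K) hdetK
        _ = d * Real.log (K + lam) := by rw [Real.log_pow]
    have h4 : Real.log (Λ 0).det = d * Real.log lam := by
      rw [hdet0, Real.log_pow]
    have h5 : Real.log ((K + lam) / lam) = Real.log (K + lam) - Real.log lam :=
      Real.log_div (by positivity) hlam0.ne'
    rw [h2] at h1
    rw [h5]
    nlinarith [h1, h3, h4]
  have hsum0 : 0 ≤ ∑ k ∈ Finset.range K, Real.sqrt (x k) :=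
    Finset.sum_nonneg fun k _ => Real.sqrt_nonneg _
  have hcs2 : (∑ k ∈ Finset.range K, Real.sqrt (x k)) ^ 2 ≤
      K * ∑ k ∈ Finset.range K, x k := by
    have h := sq_sum_le_card_mul_sum_sq (s := Finset.range K) (f := fun k => Real.sqrt (x k))
    simpa [Finset.card_range, Real.sq_sqrt (hx0 _)] using h
  have hfinal : (∑ k ∈ Finset.range K, Real.sqrt (x k)) ^ 2 ≤
      2 * d * K * Real.log ((K + lam) / lam) := by
    calc (∑ k ∈ Finset.range K, Real.sqrt (x k)) ^ 2 ≤
        K * ∑ k ∈ Finset.range K, x k := hcs2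
      _ ≤ K * (2 * d * Real.log ((K + lam) / lam)) := by
          exact mul_le_mul_of_nonneg_left hS (Nat.cast_nonneg K)
      _ = 2 * d * K * Real.log ((K + lam) / lam) := by ring
  exact Real.le_sqrt_of_sq_le hfinal
end

section
/- Let λ > 0 and let φ_1,…,φ_K ∈ ℝ^d with ‖φ_τ‖_2 ≤ 1. Define Λ = λ I_d + Σ_{τ=1}^{K} φ_τ φ_τᵀ. Let H > 0 and v_1,…,v_K ∈ ℝ with |v_τ| ≤ H, and w = Λ^{-1} Σ_{τ=1}^K φ_τ v_τ. Then ‖w‖_2 ≤ H sqrt(d K / λ). -/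
open Matrix Finset

lemma vecMulVec_mulVec_eq {d : ℕ} (a b x : Fin d → ℝ) :
    vecMulVec a b *ᵥ x = (b ⬝ᵥ x) • a := by
  ext i
  simp only [mulVec, dotProduct, vecMulVec_apply, Pi.smul_apply, smul_eq_mul, Finset.sum_mul]
  exact Finset.sum_congr rfl fun j _ => by ring

lemma sum_mulVec' {d K : ℕ} (A : Fin K → Matrix (Fin d) (Fin d) ℝ) (x : Fin d → ℝ) :
    (∑ τ, A τ) *ᵥ x = ∑ τ, A τ *ᵥ x := by
  ext i
  simp only [mulVec, dotProduct, Matrix.sum_apply, Finset.sum_apply, Finset.sum_mul]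
  exact Finset.sum_comm

lemma dotProduct_sum' {d K : ℕ} (x : Fin d → ℝ) (f : Fin K → Fin d → ℝ) :
    x ⬝ᵥ (∑ τ, f τ) = ∑ τ, x ⬝ᵥ f τ := by
  simp only [dotProduct, Finset.sum_apply, Finset.mul_sum]
  exact Finset.sum_comm

theorem ridge_coefficient_bound (d K : ℕ) (lam H : ℝ) (hlam : 0 < lam) (hH : 0 < H)
    (φ : Fin K → Fin d → ℝ) (hφ : ∀ τ, Real.sqrt (∑ i, φ τ i ^ 2) ≤ 1)
    (v : Fin K → ℝ) (hv : ∀ τ, |v τ| ≤ H)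
    (w : Fin d → ℝ)
    (hw : w = (lam • (1 : Matrix (Fin d) (Fin d) ℝ) +
        ∑ τ, vecMulVec (φ τ) (φ τ))⁻¹ *ᵥ ∑ τ, v τ • φ τ) :
    Real.sqrt (∑ i, w i ^ 2) ≤ H * Real.sqrt (d * K / lam) := by
  rcases Nat.eq_zero_or_pos d with hd | hd
  · subst hd
    simp only [Finset.univ_eq_empty, Finset.sum_empty, Real.sqrt_zero]
    positivity
  set Λ : Matrix (Fin d) (Fin d) ℝ :=
    lam • (1 : Matrix (Fin d) (Fin d) ℝ) + ∑ τ, vecMulVec (φ τ) (φ τ) with hΛdef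
  have hPD : Λ.PosDef := by
    refine Matrix.posDef_iff_dotProduct_mulVec.mpr ⟨?_, ?_⟩
    · show Λᴴ = Λ
      ext i j
      simp [Λ, Matrix.add_apply, Matrix.smul_apply, Matrix.one_apply, Matrix.sum_apply,
        vecMulVec_apply, mul_comm, eq_comm]
    · intro x hx
      have hxx : 0 < x ⬝ᵥ x := by
        have : x ⬝ᵥ x = ∑ i, x i ^ 2 := by
          simp [dotProduct, pow_two]
        rw [this]
        have : ∃ i, x i ≠ 0 := by
          by_contra h
          push_neg at h
          exact hx (funext h)
        obtain ⟨i, hi⟩ := this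
        apply Finset.sum_pos' (fun j _ => sq_nonneg _)
        exact ⟨i, Finset.mem_univ i, by positivity⟩
      have hmv : Λ *ᵥ x = lam • x + ∑ τ, (φ τ ⬝ᵥ x) • φ τ := by
        rw [hΛdef, add_mulVec, smul_mulVec, one_mulVec, sum_mulVec']
        congr 1
        exact Finset.sum_congr rfl fun τ _ => vecMulVec_mulVec_eq _ _ _
      rw [show (star x : Fin d → ℝ) = x from rfl, hmv, dotProduct_add, dotProduct_smul,
        dotProduct_sum']
      have h1 : 0 < lam • (x ⬝ᵥ x) := by
        simpa [smul_eq_mul] using mul_pos hlam hxx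
      have h2 : 0 ≤ ∑ τ, x ⬝ᵥ (φ τ ⬝ᵥ x) • φ τ := by
        apply Finset.sum_nonneg
        intro τ _
        rw [dotProduct_smul, smul_eq_mul, dotProduct_comm]
        exact mul_self_nonneg _
      positivity
  have hunit : IsUnit Λ.det := (Matrix.isUnit_iff_isUnit_det Λ).mp hPD.isUnit
  have hΛw : Λ *ᵥ w = ∑ τ, v τ • φ τ := by
    rw [hw, mulVec_mulVec, Matrix.mul_nonsing_inv Λ hunit, one_mulVec]
  -- energy identity
  have hmv : Λ *ᵥ w = lam • w + ∑ τ, (φ τ ⬝ᵥ w) • φ τ := by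
    rw [hΛdef, add_mulVec, smul_mulVec, one_mulVec, sum_mulVec']
    congr 1
    exact Finset.sum_congr rfl fun τ _ => vecMulVec_mulVec_eq _ _ _
  have key : lam * (w ⬝ᵥ w) + ∑ τ, (φ τ ⬝ᵥ w) ^ 2 = ∑ τ, v τ * (φ τ ⬝ᵥ w) := by
    have h1 : w ⬝ᵥ (Λ *ᵥ w) = lam * (w ⬝ᵥ w) + ∑ τ, (φ τ ⬝ᵥ w) ^ 2 := by
      rw [hmv, dotProduct_add, dotProduct_smul, dotProduct_sum']
      simp only [dotProduct_smul, smul_eq_mul]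
      congr 1
      exact Finset.sum_congr rfl fun τ _ => by rw [dotProduct_comm w]; ring
    have h2 : w ⬝ᵥ (∑ τ, v τ • φ τ) = ∑ τ, v τ * (φ τ ⬝ᵥ w) := by
      rw [dotProduct_sum']
      exact Finset.sum_congr rfl fun τ _ => by
        rw [dotProduct_smul, smul_eq_mul, dotProduct_comm]
    rw [← h1, ← h2, hΛw]
  have hbound : lam * (w ⬝ᵥ w) ≤ K * (H ^ 2 / 4) := by
    have : lam * (w ⬝ᵥ w) = ∑ τ, (v τ * (φ τ ⬝ᵥ w) - (φ τ ⬝ᵥ w) ^ 2) := by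
      rw [Finset.sum_sub_distrib]
      linarith [key]
    rw [this]
    calc ∑ τ, (v τ * (φ τ ⬝ᵥ w) - (φ τ ⬝ᵥ w) ^ 2) ≤ ∑ _τ : Fin K, H ^ 2 / 4 := by
          apply Finset.sum_le_sum
          intro τ _
          have hvτ := hv τ
          have h1 : v τ ^ 2 ≤ H ^ 2 := by
            have := abs_nonneg (v τ)
            nlinarith [sq_abs (v τ)]
          nlinarith [sq_nonneg (φ τ ⬝ᵥ w - v τ / 2)]
      _ = K * (H ^ 2 / 4) := by simp [mul_comm]
  have hww : w ⬝ᵥ w = ∑ i, w i ^ 2 := by simp [dotProduct, pow_two]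
  have hfinal : ∑ i, w i ^ 2 ≤ H ^ 2 * (d * K / lam) := by
    have hd1 : (1 : ℝ) ≤ d := by exact_mod_cast hd
    have hK : (0 : ℝ) ≤ K := Nat.cast_nonneg K
    rw [← hww]
    rw [← mul_div_assoc, le_div_iff₀ hlam]
    calc (w ⬝ᵥ w) * lam = lam * (w ⬝ᵥ w) := by ring
      _ ≤ K * (H ^ 2 / 4) := hbound
      _ ≤ H ^ 2 * (↑d * ↑K) := by
          nlinarith [mul_nonneg hK (sq_nonneg H),
            mul_le_mul_of_nonneg_right hd1 (mul_nonneg hK (sq_nonneg H))]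
  calc Real.sqrt (∑ i, w i ^ 2) ≤ Real.sqrt (H ^ 2 * (d * K / lam)) :=
        Real.sqrt_le_sqrt hfinal
    _ = H * Real.sqrt (d * K / lam) := by
        rw [Real.sqrt_mul (sq_nonneg H), Real.sqrt_sq hH.le]
end

section
/- Let H > 0, λ > 0, β > 0 and let f, g : X → ℝ on a set X satisfy |f(z) - g(z)| ≤ Γ(z) for all z ∈ X, where Γ : X → ℝ≥0, and suppose 0 ≤ f(z) ≤ H for all z. Define ĝ(z) = min{ max{0, g(z) + Γ(z)}, H }. Then for all z ∈ X: -2 min{H, Γ(z)} ≤ f(z) - ĝ(z) ≤ 0. -/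
theorem optimism_truncation {X : Type*} (H : ℝ) (hH : 0 < H)
    (f g : X → ℝ) (Γ : X → ℝ) (hΓ : ∀ z, 0 ≤ Γ z)
    (hfg : ∀ z, |f z - g z| ≤ Γ z) (hf : ∀ z, 0 ≤ f z ∧ f z ≤ H) :
    ∀ z, -2 * min H (Γ z) ≤ f z - min (max 0 (g z + Γ z)) H ∧
      f z - min (max 0 (g z + Γ z)) H ≤ 0 := by
  intro z
  have h := abs_le.mp (hfg z)
  have h1 := (hf z).1
  have h2 := (hf z).2
  have hg := hΓ z
  constructor
  · rcases le_total H (Γ z) with hc | hc <;>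
      simp only [min_def, max_def] <;> split_ifs <;> linarith
  · rcases le_total H (Γ z) with hc | hc <;>
      simp only [min_def, max_def] <;> split_ifs <;> linarith
end
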